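/- For normalized disjunctive multiplicity expressions E_1 and E_2, L(E_2) ⊆ L(E_1) if and only if C_{E_1} ⊆ C_{E_2}, N_{E_2} ⊆ N_{E_1}, and P_{E_1} ⊆ P_{E_2}. -/

import Mathlib

open scoped Classical

variable {α : Type}

/-- Unordered words: multisets of symbols, as occurrence-count functions. -/
abbrev UWord (α : Type) := α → ℕ

/-- Multiplicities `*`, `+`, `?`, `0`, `1`. -/
inductive Mult : Type where
  | zero | one | opt | plus | star
deriving DecidableEq

/-- Interpretation of multiplicities as sets of natural numbers. -/
def Mult.sem : Mult → Set ℕ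
  | .zero => {0}
  | .one => {1}
  | .opt => {0, 1}
  | .plus => {n | 0 < n}
  | .star => Set.univ

/-- A disjunction `a₁^{M₁} | … | a_k^{M_k}`. -/
abbrev Disj (α : Type) := List (α × Mult)

/-- A disjunctive multiplicity expression `D₁^{M₁} ⊎ … ⊎ D_n^{M_n}`. -/
abbrev DME (α : Type) := List (Disj α × Mult)

/-- Language of `a^M`. -/
def singleLang (a : α) (m : Mult) : Set (UWord α) :=
  {w | w a ∈ m.sem ∧ ∀ b, b ≠ a → w b = 0}

/-- Language of a disjunction. -/
def disjLang (D : Disj α) : Set (UWord α) :=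
  {w | ∃ p ∈ D, w ∈ singleLang p.1 p.2}

/-- Pointwise (multiset) sum of a list of unordered words. -/
def sumWords (ws : List (UWord α)) : UWord α := fun a => (ws.map (fun u => u a)).sum

/-- Language of `D^M`. -/
def powLang (L : Set (UWord α)) (m : Mult) : Set (UWord α) :=
  {w | ∃ ws : List (UWord α), ws.length ∈ m.sem ∧ (∀ u ∈ ws, u ∈ L) ∧ w = sumWords ws}

/-- Language of a disjunctive multiplicity expression. -/
def dmeLang (E : DME α) : Set (UWord α) :=
  {w | ∃ ws : List (UWord α),
      List.Forall₂ (fun p u => u ∈ powLang (disjLang p.1) p.2) E ws ∧ w = sumWords ws}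

/-- Symbols occurring in a disjunctive multiplicity expression. -/
def dmeSymbols (E : DME α) : List α := E.flatMap (fun p => p.1.map Prod.fst)

/-- Normalized disjunctive multiplicity expression (each symbol occurs at most once,
each disjunction nonempty, and the two normal-form conditions of the paper). -/
def Normalized (E : DME α) : Prop :=
  (dmeSymbols E).Nodup ∧
  ∀ p ∈ E, p.1 ≠ [] ∧
    (p.2 ≠ Mult.one → p.2 = Mult.plus ∧ ∀ q ∈ p.1, q.2 = Mult.one) ∧
    ((∃ q ∈ p.1, (0 : ℕ) ∈ q.2.sem) → ∀ q ∈ p.1, (0 : ℕ) ∈ q.2.sem)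

/-- Conflicting pairs of siblings `C_E`. -/
def CE (E : DME α) : Set (α × α) :=
  {p | ¬ ∃ w ∈ dmeLang E, w p.1 ≠ 0 ∧ w p.2 ≠ 0}

/-- Extended cardinality map `N_E`. -/
def NE (E : DME α) : Set (α × ℕ) :=
  {p | ∃ w ∈ dmeLang E, w p.1 = p.2}

/-- Sets of required symbols `P_E`. -/
def PE (E : DME α) : Set (Set α) :=
  {X | ∀ w ∈ dmeLang E, ∃ a ∈ X, w a ≠ 0}

/-- Consistency of an unordered word with a characterizing triple. -/
def ConsTriple (w : UWord α) (C : Set (α × α)) (N : Set (α × ℕ)) (P : Set (Set α)) : Prop :=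
  (∀ p ∈ C, ¬ (w p.1 ≠ 0 ∧ w p.2 ≠ 0)) ∧
  (∀ a, (a, w a) ∈ N) ∧
  (∀ X ∈ P, ∃ a ∈ X, w a ≠ 0)

/-- Language of a disjunction-free multiplicity expression given as a list of
symbol/multiplicity pairs. -/
def dfLang (l : List (α × Mult)) : Set (UWord α) :=
  {w | (∀ p ∈ l, w p.1 ∈ p.2.sem) ∧ ∀ b, b ∉ l.map Prod.fst → w b = 0}

/-- Finite unordered trees. -/
inductive UTree (α : Type) : Type where
  | node : α → List (UTree α) → UTree α

def UTree.lab : UTree α → α | .node a _ => a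

def UTree.children : UTree α → List (UTree α) | .node _ ts => ts

/-- Twig queries: labels in `Σ ∪ {⋆}` (wildcard = `none`); each child subquery is tagged
with `false` for a child edge and `true` for a descendant edge. -/
inductive Twig (α : Type) : Type where
  | node : Option α → List (Twig α × Bool) → Twig α

/-- Proper subtree (proper descendant) relation. -/
inductive StrictDesc : UTree α → UTree α → Prop where
  | child {s t : UTree α} : s ∈ t.children → StrictDesc s t
  | step {s u t : UTree α} : StrictDesc s u → u ∈ t.children → StrictDesc s t

/-- `Sat t q`: the twig query `q` can be embedded in the tree `t`
(root to root, child edges to child edges, descendant edges to proper descendants,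
labels preserved up to wildcard). -/
def Sat : UTree α → Twig α → Prop
  | t, .node l qs =>
      (∀ x ∈ l, x = t.lab) ∧
      ∀ p ∈ qs, (p.2 = false → ∃ t' ∈ t.children, Sat t' p.1) ∧
                (p.2 = true → ∃ t', StrictDesc t' t ∧ Sat t' p.1)
termination_by t q => sizeOf q
decreasing_by
  all_goals
    obtain ⟨q', b'⟩ := p
    have h1 : sizeOf ((q', b') : Twig α × Bool) < sizeOf qs := List.sizeOf_lt_of_mem (by assumption)
    simp at h1 ⊢
    omega

/-- `TEmb t' t` : the tree `t'` can be embedded in the tree `t` (root-, child-, and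
label-preserving). -/
def TEmb : UTree α → UTree α → Prop
  | .node a ts', t => t.lab = a ∧ ∀ s' ∈ ts', ∃ s ∈ t.children, TEmb s' s

/-- `QGEmb E a q` : the twig query `q` can be embedded in the rooted graph with edge
relation `E` at root `a`. -/
def QGEmb (E : α → α → Prop) : α → Twig α → Prop
  | a, .node l qs =>
      (∀ x ∈ l, x = a) ∧
      ∀ p ∈ qs, (p.2 = false → ∃ b, E a b ∧ QGEmb E b p.1) ∧
                (p.2 = true → ∃ b, Relation.TransGen E a b ∧ QGEmb E b p.1)
termination_by a q => sizeOf q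
decreasing_by
  all_goals
    obtain ⟨q', b'⟩ := p
    have h1 : sizeOf ((q', b') : Twig α × Bool) < sizeOf qs := List.sizeOf_lt_of_mem (by assumption)
    simp at h1 ⊢
    omega

/-- Labeled paths of a tree: sequences of labels along root-to-node paths. -/
inductive IsLabPath : UTree α → List α → Prop where
  | root {a : α} {ts : List (UTree α)} : IsLabPath (UTree.node a ts) [a]
  | cons {a : α} {ts : List (UTree α)} {s : UTree α} {p : List α} :
      s ∈ ts → IsLabPath s p → IsLabPath (UTree.node a ts) (a :: p)

/-- Paths of a rooted graph: nonempty vertex sequences starting at the root and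
following edges. -/
def IsGPath (E : α → α → Prop) (root : α) (p : List α) : Prop :=
  p ≠ [] ∧ p.head? = some root ∧ p.Chain' E

/-- The unfolding of a rooted graph, truncated at depth `n`.  For a graph with no cycle
reachable from the root, taking `n = Fintype.card α` yields the full unfolding. -/
noncomputable def unfoldG [Fintype α] (E : α → α → Prop) : ℕ → α → UTree α
  | 0, a => .node a []
  | n + 1, a => .node a (((Finset.univ.filter fun b => E a b).toList).map (unfoldG E n))

/-- Number of leaves of a tree. -/
def leafCount : UTree α → ℕ
  | .node _ ts => if ts.isEmpty then 1 else (ts.attach.map (fun s => leafCount s.1)).sum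
decreasing_by
  have h1 := List.sizeOf_lt_of_mem s.2
  simp
  omega

/-- Disjunction-free multiplicity schema: a root label together with, for each label `a`,
a disjunction-free multiplicity expression given as the multiplicity `R a b` of every
symbol `b` (`Mult.zero` meaning `b` does not occur). -/
structure MS (α : Type) where
  root : α
  R : α → α → Mult

/-- Every node's children-label multiset matches the rule for the node's label. -/
inductive LocalOK [DecidableEq α] (R : α → α → Mult) : UTree α → Prop where
  | node {a : α} {ts : List (UTree α)} :
      (∀ b, ((ts.map UTree.lab).count b) ∈ (R a b).sem) →
      (∀ s ∈ ts, LocalOK R s) →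
      LocalOK R (UTree.node a ts)

/-- A tree satisfies a disjunction-free multiplicity schema. -/
def SatS [DecidableEq α] (S : MS α) (t : UTree α) : Prop :=
  t.lab = S.root ∧ LocalOK S.R t

/-- Edges of the universal dependency graph: `b` occurs in `R a` with multiplicity `+` or `1`. -/
def uEdge (S : MS α) (a b : α) : Prop := S.R a b = Mult.plus ∨ S.R a b = Mult.one

/-- Edges of the dependency graph: `b` occurs in `R a` with multiplicity in `{*,+,?,1}`. -/
def dEdge (S : MS α) (a b : α) : Prop := S.R a b ≠ Mult.zero

/-- A simulation of the rooted graph `(α, root, E)` in the tree `t`. -/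
def IsSimulation (E : α → α → Prop) (root : α) (t : UTree α) (R : α → UTree α → Prop) : Prop :=
  R root t ∧ (∀ a s, R a s → s.lab = a) ∧
  (∀ a s, R a s → ∀ b, E a b → ∃ s' ∈ s.children, R b s')

/-- One fuse step: two sibling nodes with the same label are merged into a single node
whose children are the children of both (applied anywhere in the tree). -/
inductive Fuse : UTree α → UTree α → Prop where
  | here {a b : α} {l₁ l₂ l₃ cs₁ cs₂ : List (UTree α)} :
      Fuse (UTree.node a (l₁ ++ UTree.node b cs₁ :: l₂ ++ UTree.node b cs₂ :: l₃))
           (UTree.node a (l₁ ++ UTree.node b (cs₁ ++ cs₂) :: l₂ ++ l₃))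
  | there {a : α} {s s' : UTree α} {l₁ l₂ : List (UTree α)} :
      Fuse s s' → Fuse (UTree.node a (l₁ ++ s :: l₂)) (UTree.node a (l₁ ++ s' :: l₂))

/-- One add step: an arbitrary new subtree is attached as an additional child of some
node of the tree. -/
inductive AddOp : UTree α → UTree α → Prop where
  | here {a : α} {s : UTree α} {l : List (UTree α)} :
      AddOp (UTree.node a l) (UTree.node a (s :: l))
  | there {a : α} {s s' : UTree α} {l₁ l₂ : List (UTree α)} :
      AddOp s s' → AddOp (UTree.node a (l₁ ++ s :: l₂)) (UTree.node a (l₁ ++ s' :: l₂))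

namespace DMEAux

variable {α : Type}

lemma sumWords_cons (u : UWord α) (ws : List (UWord α)) (a : α) :
    sumWords (u :: ws) a = u a + sumWords ws a := by
  simp [sumWords]

lemma sumWords_append (l₁ l₂ : List (UWord α)) (b : α) :
    sumWords (l₁ ++ l₂) b = sumWords l₁ b + sumWords l₂ b := by
  simp [sumWords]

lemma sumWords_replicate (n : ℕ) (u : UWord α) (b : α) :
    sumWords (List.replicate n u) b = n * u b := by
  simp [sumWords, List.map_replicate, List.sum_replicate, smul_eq_mul]

lemma sumWords_zero {ws : List (UWord α)} {b : α} (h : ∀ u ∈ ws, u b = 0) :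
    sumWords ws b = 0 := by
  induction ws with
  | nil => simp [sumWords]
  | cons u ws ih =>
    rw [sumWords_cons, h u (by simp), ih (fun v hv => h v (by simp [hv]))]

lemma disj_supp {D : Disj α} {v : UWord α} (h : v ∈ disjLang D) {b : α}
    (hb : b ∉ D.map Prod.fst) : v b = 0 := by
  obtain ⟨p, hp, hv⟩ := h
  exact hv.2 b (fun hba => hb (hba ▸ List.mem_map_of_mem (f := Prod.fst) hp))

lemma pow_supp {D : Disj α} {M : Mult} {u : UWord α} (h : u ∈ powLang (disjLang D) M)
    {b : α} (hb : b ∉ D.map Prod.fst) : u b = 0 := by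
  obtain ⟨ws, -, hmem, rfl⟩ := h
  exact sumWords_zero (fun v hv => disj_supp (hmem v hv) hb)

abbrev F2 (E : DME α) (ws : List (UWord α)) : Prop :=
  List.Forall₂ (fun p u => u ∈ powLang (disjLang p.1) p.2) E ws

lemma f2_supp {E : DME α} {ws : List (UWord α)} (h : F2 E ws) {b : α}
    (hb : b ∉ dmeSymbols E) : sumWords ws b = 0 := by
  induction h with
  | nil => simp [sumWords]
  | @cons p u E' ws' hp _ ih =>
    simp only [dmeSymbols, List.flatMap_cons, List.mem_append] at hb
    push_neg at hb
    rw [sumWords_cons, pow_supp hp hb.1, ih hb.2]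

lemma dme_supp {E : DME α} {u : UWord α} (h : u ∈ dmeLang E) {b : α}
    (hb : b ∉ dmeSymbols E) : u b = 0 := by
  obtain ⟨ws, hf, rfl⟩ := h
  exact f2_supp hf hb

lemma nodupD : ∀ {E : DME α} {D : Disj α} {M : Mult},
    (dmeSymbols E).Nodup → (D, M) ∈ E → (D.map Prod.fst).Nodup := by
  intro E
  induction E with
  | nil => intro D M _ h; cases h
  | cons p E' ih =>
    intro D M hnd h
    have hnd' : (p.1.map Prod.fst ++ dmeSymbols E').Nodup := by
      simpa [dmeSymbols, List.flatMap_cons] using hnd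
    rcases List.mem_cons.mp h with h | h
    · subst h; exact (List.nodup_append.mp hnd').1
    · exact ih (List.nodup_append.mp hnd').2.1 h

lemma extract : ∀ {E : DME α} {ws : List (UWord α)}, F2 E ws →
    ∀ {D : Disj α} {M : Mult}, (dmeSymbols E).Nodup → (D, M) ∈ E →
    ∃ u ∈ powLang (disjLang D) M, ∀ a ∈ D.map Prod.fst, sumWords ws a = u a := by
  intro E ws hf
  induction hf with
  | nil => intro D M _ h; cases h
  | @cons p u E' ws' hp hrest ih =>
    intro D M hnd hmem
    have hnd' : (p.1.map Prod.fst ++ dmeSymbols E').Nodup := by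
      simpa [dmeSymbols, List.flatMap_cons] using hnd
    obtain ⟨h1, h2, hdisj⟩ := List.nodup_append.mp hnd'
    rcases List.mem_cons.mp hmem with h | h
    · subst h
      refine ⟨u, hp, fun a ha => ?_⟩
      rw [sumWords_cons, f2_supp hrest (fun hc => hdisj a ha a hc rfl), Nat.add_zero]
    · obtain ⟨ui, hui, heq⟩ := ih h2 h
      refine ⟨ui, hui, fun a ha => ?_⟩
      have haE' : a ∈ dmeSymbols E' := List.mem_flatMap.mpr ⟨(D, M), h, ha⟩
      rw [sumWords_cons, pow_supp hp (fun hc => hdisj a hc a haE' rfl), heq a ha, Nat.zero_add]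

lemma pow_one {L : Set (UWord α)} {u : UWord α} (h : u ∈ powLang L Mult.one) :
    ∃ v ∈ L, u = v := by
  obtain ⟨ws, hlen, hmem, rfl⟩ := h
  have h1 : ws.length = 1 := hlen
  obtain ⟨v, rfl⟩ := List.length_eq_one_iff.mp h1
  exact ⟨v, hmem v (by simp), funext fun a => by simp [sumWords]⟩

lemma ce_one {E : DME α} (h : Normalized E) {D : Disj α} (hD : (D, Mult.one) ∈ E)
    {a b : α} (ha : a ∈ D.map Prod.fst) (hb : b ∈ D.map Prod.fst) (hab : a ≠ b) :
    (a, b) ∈ CE E := by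
  rintro ⟨u, hu, hua, hub⟩
  obtain ⟨ws, hf, rfl⟩ := hu
  obtain ⟨ui, hui, heq⟩ := extract hf h.1 hD
  obtain ⟨v, hv, rfl⟩ := pow_one hui
  obtain ⟨q, hq, hvq⟩ := hv
  rw [heq a ha] at hua
  rw [heq b hb] at hub
  rcases eq_or_ne a q.1 with h1 | h1
  · exact hub (hvq.2 b (h1 ▸ hab.symm))
  · exact hua (hvq.2 a h1)

lemma pe_plus {E : DME α} (h : Normalized E) {D : Disj α} (hD : (D, Mult.plus) ∈ E) :
    {a | a ∈ D.map Prod.fst} ∈ PE E := by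
  intro u hu
  obtain ⟨ws, hf, rfl⟩ := hu
  obtain ⟨ui, hui, heq⟩ := extract hf h.1 hD
  obtain ⟨ls, hlen, hmem, rfl⟩ := hui
  have hpos : 0 < ls.length := hlen
  obtain ⟨v, ls', rfl⟩ : ∃ v ls', ls = v :: ls' := by
    cases ls with
    | nil => simp at hpos
    | cons v ls' => exact ⟨v, ls', rfl⟩
  obtain ⟨q, hq, hvq⟩ := hmem v (by simp)
  refine ⟨q.1, List.mem_map_of_mem (f := Prod.fst) hq, ?_⟩
  have hone : q.2 = Mult.one := ((h.2 _ hD).2.1 (show Mult.plus ≠ Mult.one by decide)).2 q hq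
  have hv1 : v q.1 = 1 := by
    have := hvq.1
    rw [hone] at this
    simpa [Mult.sem] using this
  rw [heq q.1 (List.mem_map_of_mem (f := Prod.fst) hq), sumWords_cons, hv1]
  omega

lemma pe_one {E : DME α} (h : Normalized E) {D : Disj α} (hD : (D, Mult.one) ∈ E)
    (hz : ∀ q ∈ D, (0 : ℕ) ∉ q.2.sem) : {a | a ∈ D.map Prod.fst} ∈ PE E := by
  intro u hu
  obtain ⟨ws, hf, rfl⟩ := hu
  obtain ⟨ui, hui, heq⟩ := extract hf h.1 hD
  obtain ⟨v, hv, rfl⟩ := pow_one hui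
  obtain ⟨q, hq, hvq⟩ := hv
  refine ⟨q.1, List.mem_map_of_mem (f := Prod.fst) hq, ?_⟩
  rw [heq q.1 (List.mem_map_of_mem (f := Prod.fst) hq)]
  intro h0
  exact hz q hq (h0 ▸ hvq.1)

lemma ne_val {E : DME α} (h : Normalized E) {D : Disj α} (hD : (D, Mult.one) ∈ E)
    {a : α} {m : Mult} (ham : (a, m) ∈ D) {n : ℕ} (hn : n ≠ 0) (hN : (a, n) ∈ NE E) :
    n ∈ m.sem := by
  obtain ⟨u, hu, hua0⟩ := hN
  have hua : u a = n := hua0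
  clear hua0
  obtain ⟨ws, hf, rfl⟩ := hu
  have haS : a ∈ D.map Prod.fst := List.mem_map_of_mem (f := Prod.fst) ham
  obtain ⟨ui, hui, heq⟩ := extract hf h.1 hD
  obtain ⟨v, hv, rfl⟩ := pow_one hui
  obtain ⟨q, hq, hvq⟩ := hv
  rw [heq a haS] at hua
  have haq : a = q.1 := by
    by_contra hne
    exact hn (hua ▸ hvq.2 a hne)
  have hqam : q = (a, m) :=
    List.inj_on_of_nodup_map (nodupD h.1 hD) hq ham haq.symm
  rw [hqam] at hvq
  rw [← hua]
  exact hvq.1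

noncomputable def restr (w : UWord α) (S : List α) : UWord α :=
  fun a => if a ∈ S then w a else 0

noncomputable def ind (a : α) : UWord α := fun b => if b = a then 1 else 0

lemma sum_flat (w : UWord α) {l : List α} (hnd : l.Nodup) (b : α) :
    sumWords (l.flatMap fun a => List.replicate (w a) (ind a)) b
      = if b ∈ l then w b else 0 := by
  induction l with
  | nil => simp [sumWords]
  | cons a l ih =>
    rw [List.flatMap_cons, sumWords_append, sumWords_replicate,
      ih (List.nodup_cons.mp hnd).2]
    by_cases hba : b = a
    · subst hba
      simp [ind, (List.nodup_cons.mp hnd).1]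
    · simp [ind, hba]

lemma sum_restr (w : UWord α) : ∀ {E : DME α}, (dmeSymbols E).Nodup → ∀ b,
    sumWords (E.map fun p => restr w (p.1.map Prod.fst)) b
      = if b ∈ dmeSymbols E then w b else 0 := by
  intro E
  induction E with
  | nil => intro _ b; simp [sumWords, dmeSymbols]
  | cons p E' ih =>
    intro hnd b
    have hnd' : (p.1.map Prod.fst ++ dmeSymbols E').Nodup := by
      simpa [dmeSymbols, List.flatMap_cons] using hnd
    obtain ⟨h1, h2, hdisj⟩ := List.nodup_append.mp hnd'
    rw [List.map_cons, sumWords_cons, ih h2 b]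
    have hmemc : b ∈ dmeSymbols (p :: E') ↔ b ∈ p.1.map Prod.fst ∨ b ∈ dmeSymbols E' := by
      simp [dmeSymbols, List.flatMap_cons]
    by_cases hbp : b ∈ p.1.map Prod.fst
    · have hbe : b ∉ dmeSymbols E' := fun hc => hdisj b hbp b hc rfl
      simp [restr, hbp, hbe, hmemc]
    · by_cases hbe : b ∈ dmeSymbols E' <;> simp [restr, hbp, hbe, hmemc]

lemma comp_mem {E : DME α} (h : Normalized E) {w : UWord α}
    (hC : ∀ p ∈ CE E, ¬(w p.1 ≠ 0 ∧ w p.2 ≠ 0))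
    (hN : ∀ a, (a, w a) ∈ NE E)
    (hP : ∀ X ∈ PE E, ∃ a ∈ X, w a ≠ 0)
    {D : Disj α} {M : Mult} (hD : (D, M) ∈ E) :
    restr w (D.map Prod.fst) ∈ powLang (disjLang D) M := by
  obtain ⟨hne, hnf, hz3⟩ := h.2 _ hD
  by_cases hM : M = Mult.one
  · subst hM
    by_cases hex : ∃ a ∈ D.map Prod.fst, w a ≠ 0
    · obtain ⟨a, haS, hwa⟩ := hex
      obtain ⟨⟨a', m⟩, ham, rfl⟩ := List.mem_map.mp haS
      have hsem : w a' ∈ m.sem := ne_val h hD ham hwa (hN a')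
      have hzero : ∀ b ∈ D.map Prod.fst, b ≠ a' → w b = 0 := by
        intro b hbS hba
        by_contra hwb
        exact hC (a', b) (ce_one h hD haS hbS (fun hc => hba hc.symm)) ⟨hwa, hwb⟩
      refine ⟨[restr w (D.map Prod.fst)], by simp [Mult.sem], ?_,
        funext fun b => by simp [sumWords]⟩
      intro u hu
      simp only [List.mem_singleton] at hu
      subst hu
      refine ⟨(a', m), ham, ?_, ?_⟩
      · simpa [restr, haS] using hsem
      · intro b hba
        simp only [restr]
        split
        · exact hzero b (by assumption) hba
        · rfl
    · push_neg at hex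
      by_cases hz : ∃ q ∈ D, (0 : ℕ) ∈ q.2.sem
      · obtain ⟨q, hq, hq0⟩ := hz
        refine ⟨[restr w (D.map Prod.fst)], by simp [Mult.sem], ?_,
          funext fun b => by simp [sumWords]⟩
        intro u hu
        simp only [List.mem_singleton] at hu
        subst hu
        refine ⟨q, hq, ?_, ?_⟩
        · have hqS : q.1 ∈ D.map Prod.fst := List.mem_map_of_mem (f := Prod.fst) hq
          simpa [restr, hqS, hex q.1 hqS] using hq0
        · intro b _
          simp only [restr]
          split
          · exact hex b (by assumption)
          · rfl
      · exfalso
        push_neg at hz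
        obtain ⟨a, haS, hwa⟩ := hP _ (pe_one h hD hz)
        exact hwa (hex a haS)
  · obtain ⟨hMp, hall⟩ := hnf hM
    subst hMp
    refine ⟨(D.map Prod.fst).flatMap (fun a => List.replicate (w a) (ind a)), ?_, ?_, ?_⟩
    · obtain ⟨a, haS, hwa⟩ := hP _ (pe_plus h hD)
      have : ind a ∈ (D.map Prod.fst).flatMap (fun a => List.replicate (w a) (ind a)) :=
        List.mem_flatMap.mpr ⟨a, haS, List.mem_replicate.mpr ⟨hwa, rfl⟩⟩
      exact List.length_pos_of_mem this
    · intro v hv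
      obtain ⟨a, haS, hvrep⟩ := List.mem_flatMap.mp hv
      have hva : v = ind a := (List.mem_replicate.mp hvrep).2
      subst hva
      obtain ⟨q, hq, hqa⟩ := List.mem_map.mp haS
      refine ⟨q, hq, ?_, ?_⟩
      · rw [hall q hq]
        simp [ind, hqa, Mult.sem]
      · intro b hb
        simp [ind, show b ≠ a from hqa ▸ hb]
    · funext b
      rw [sum_flat w (nodupD h.1 hD)]
      simp [restr]

lemma cons_mem {E : DME α} (h : Normalized E) {w : UWord α}
    (hC : ∀ p ∈ CE E, ¬(w p.1 ≠ 0 ∧ w p.2 ≠ 0))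
    (hN : ∀ a, (a, w a) ∈ NE E)
    (hP : ∀ X ∈ PE E, ∃ a ∈ X, w a ≠ 0) : w ∈ dmeLang E := by
  refine ⟨E.map fun p => restr w (p.1.map Prod.fst), ?_, ?_⟩
  · rw [List.forall₂_map_right_iff]
    refine List.forall₂_same.mpr fun p hp => ?_
    exact comp_mem h hC hN hP (show (p.1, p.2) ∈ E by simpa using hp)
  · funext b
    rw [sum_restr w h.1 b]
    by_cases hb : b ∈ dmeSymbols E
    · rw [if_pos hb]
    · rw [if_neg hb]
      obtain ⟨u, hu, hub⟩ := hN b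
      have hub' : u b = w b := hub
      rw [← hub']
      exact dme_supp hu hb

end DMEAux
/-- Lemma 3: language containment of normalized disjunctive multiplicity
expressions is characterized by inclusions of the characterizing triples. -/
theorem dme_containment_iff_triple_inclusions
    {α : Type} (E₁ E₂ : DME α) (h₁ : Normalized E₁) (h₂ : Normalized E₂) :
    dmeLang E₂ ⊆ dmeLang E₁ ↔
      (CE E₁ ⊆ CE E₂ ∧ NE E₂ ⊆ NE E₁ ∧ PE E₁ ⊆ PE E₂) := by
  constructor
  · intro hsub
    refine ⟨?_, ?_, ?_⟩
    · rintro p hp ⟨u, hu, h1, h2⟩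
      exact hp ⟨u, hsub hu, h1, h2⟩
    · rintro p ⟨u, hu, hval⟩
      exact ⟨u, hsub hu, hval⟩
    · intro X hX u hu
      exact hX u (hsub hu)
  · rintro ⟨hC, hN, hP⟩ w hw
    apply DMEAux.cons_mem h₁
    · intro p hp hcontra
      exact hC hp ⟨w, hw, hcontra.1, hcontra.2⟩
    · intro a
      exact hN ⟨w, hw, rfl⟩
    · intro X hX
      exact hP hX w hw
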